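/- For every natural number n ≥ 1, the generalized quaternion algebra H_ℚ(−1, a_{2n+1}·a_{2n−1}) splits, i.e. it is isomorphic as a ℚ-algebra to the algebra of 2×2 matrices over ℚ. -/

import Mathlib

/-- The sequence `a` defined by `a 0 = 0`, `a 1 = 1`, `a (n+2) = l * a (n+1) + a n`. -/
def a (l : ℕ) : ℕ → ℤ
  | 0 => 0
  | 1 => 1
  | n + 2 => l * a l (n + 1) + a l n

/-- The sequence `b` defined by `b 0 = 2`, `b 1 = l`, `b (n+2) = l * b (n+1) + b n`. -/
def b (l : ℕ) : ℕ → ℤ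
  | 0 => 2
  | 1 => (l : ℤ)
  | n + 2 => l * b l (n + 1) + b l n

open Quaternion Matrix

lemma split_of_sq (x : ℚ) :
    Nonempty (ℍ[ℚ, -1, (x^2+1)] ≃ₐ[ℚ] Matrix (Fin 2) (Fin 2) ℚ) := by
  set β : ℚ := x^2+1 with hβ
  have hβ0 : β ≠ 0 := by positivity
  let Q : QuaternionAlgebra.Basis (Matrix (Fin 2) (Fin 2) ℚ) (-1) 0 β :=
    { i := !![0,-1;1,0]
      j := !![x,1;1,-x]
      k := !![-1,x;x,1]
      i_mul_i := by ext i j; fin_cases i <;> fin_cases j <;>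
        simp [Matrix.mul_fin_two, Matrix.one_fin_two] <;> ring
      j_mul_j := by ext i j; fin_cases i <;> fin_cases j <;>
        simp [Matrix.mul_fin_two, Matrix.one_fin_two, hβ] <;> ring
      i_mul_j := by ext i j; fin_cases i <;> fin_cases j <;>
        simp [Matrix.mul_fin_two] <;> ring
      j_mul_i := by ext i j; fin_cases i <;> fin_cases j <;>
        simp [Matrix.mul_fin_two] <;> ring }
  let φ := Q.liftHom
  have hinj : Function.Injective φ := by
    rw [injective_iff_map_eq_zero]
    intro q hq
    have key : ∀ i j : Fin 2, (φ q) i j = (0 : Matrix (Fin 2) (Fin 2) ℚ) i j := by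
      rw [hq]; intro i j; rfl
    have h00 := key 0 0
    have h01 := key 0 1
    have h10 := key 1 0
    have h11 := key 1 1
    simp only [φ, QuaternionAlgebra.Basis.liftHom_apply, QuaternionAlgebra.Basis.lift,
      Algebra.algebraMap_eq_smul_one, Matrix.one_fin_two, Q, Matrix.add_apply,
      Matrix.smul_apply, Matrix.zero_apply, Matrix.cons_val_zero, Matrix.cons_val_one,
      Matrix.head_cons, Matrix.head_fin_const, smul_eq_mul, Matrix.of_apply,
      Matrix.cons_val', Matrix.cons_val_fin_one, Matrix.empty_val'] at h00 h01 h10 h11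
    have hI : q.imI = 0 := by linarith
    have hre : q.re = 0 := by linarith
    have hJ : q.imJ = 0 := by
      have h1 : q.imJ * x - q.imK = 0 := by linarith
      have h2 : q.imJ + q.imK * x = 0 := by linarith
      have h3 : q.imJ * (1+x^2) = 0 := by linear_combination h2 + x*h1
      have h4 : (1:ℚ)+x^2 ≠ 0 := by positivity
      exact (mul_eq_zero.mp h3).resolve_right h4
    have hK : q.imK = 0 := by
      have h1 : q.imJ * x - q.imK = 0 := by linarith
      rw [hJ] at h1; linarith
    ext <;> simp [hre, hI, hJ, hK]
  have hbij : Function.Bijective φ := by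
    refine ⟨hinj, ?_⟩
    have hfr : Module.finrank ℚ ℍ[ℚ,-1,β] = Module.finrank ℚ (Matrix (Fin 2) (Fin 2) ℚ) := by
      rw [QuaternionAlgebra.finrank_eq_four, Module.finrank_matrix]
      simp
    exact (LinearMap.injective_iff_surjective_of_finrank_eq_finrank
      (f := φ.toLinearMap) hfr).mp hinj
  exact ⟨AlgEquiv.ofBijective φ hbij⟩

lemma cassini (l : ℕ) : ∀ n : ℕ, a l (n+2) * a l n = a l (n+1)^2 + (-1)^(n+1) := by
  intro n
  induction n with
  | zero => simp [a]
  | succ m ih =>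
    have h1 : a l (m+3) = l * a l (m+2) + a l (m+1) := rfl
    have h2 : a l (m+2) = l * a l (m+1) + a l m := rfl
    have : ((-1:ℤ))^(m+2) = -(-1)^(m+1) := by ring
    rw [this, h1]
    show (↑l * a l (m+2) + a l (m+1)) * a l (m+1) = a l (m+2)^2 + -(-1)^(m+1)
    linear_combination (-(a l (m+2))) * h2 - ih


open Quaternion in
/-- The quaternion algebra `H_ℚ(-1, a_{2n+1}·a_{2n-1})` splits. -/
theorem quat_alg_splits_aa (l : ℕ) (hl : 0 < l) (n : ℕ) (hn : 1 ≤ n) :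
    Nonempty (ℍ[ℚ, -1, ((a l (2 * n + 1) * a l (2 * n - 1) : ℤ) : ℚ)] ≃ₐ[ℚ]
      Matrix (Fin 2) (Fin 2) ℚ) := by
  obtain ⟨m, rfl⟩ := Nat.exists_eq_add_of_le hn
  have h1 : 2 * (1 + m) + 1 = (2*m+1) + 2 := by ring
  have h2 : 2 * (1 + m) - 1 = 2*m+1 := by omega
  have hcas : a l (2*(1+m)+1) * a l (2*(1+m)-1) = a l (2*m+2)^2 + 1 := by
    rw [h1, h2, cassini]
    have : ((-1:ℤ))^(2*m+1+1) = 1 := by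
      rw [show 2*m+1+1 = 2*(m+1) by ring, pow_mul]; norm_num
    rw [this]
  have : ((a l (2*(1+m)+1) * a l (2*(1+m)-1) : ℤ) : ℚ) = ((a l (2*m+2) : ℤ):ℚ)^2 + 1 := by
    rw [hcas]; push_cast; ring
  rw [this]
  exact split_of_sq _
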